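/- arXiv:1806.02035 — 3 statements merged into one kernel-verified Lean document; each statement's English description precedes it below -/
import Mathlib

section
/- Let E and F be normed spaces over ℂ, let f : E → F be a continuous linear map which is topologically strict, i.e., there exists a constant C > 0 such that for every x ∈ E the distance from x to ker f satisfies infDist(x, ker f) ≤ C · ‖f x‖. Let f̄ : Completion E → Completion F denote the unique continuous linear extension of f to the completions. Then the kernel of f̄ equals the closure in Completion E of the image of ker f under the canonical embedding E → Completion E. -/
open UniformSpace Metric

/-- For a topologically strict continuous linear map `f : E → F` between normed
spaces, the kernel of the extension `f̄ : Completion E → Completion F` is the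
closure of the image of `ker f` under the canonical embedding `E → Completion E`. -/
theorem ker_completion_extension_eq_closure_ker
    {E F : Type*} [NormedAddCommGroup E] [NormedSpace ℂ E]
    [NormedAddCommGroup F] [NormedSpace ℂ F]
    (f : E →L[ℂ] F) (C : ℝ) (hC : 0 < C)
    (hstrict : ∀ x : E, infDist x (LinearMap.ker (f : E →ₗ[ℂ] F) : Set E) ≤ C * ‖f x‖)
    (fbar : Completion E →L[ℂ] Completion F)
    (hext : ∀ x : E, fbar (x : Completion E) = ((f x : F) : Completion F)) :
    (LinearMap.ker (fbar : Completion E →ₗ[ℂ] Completion F) : Set (Completion E)) =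
      closure ((fun x : E => (x : Completion E)) '' (LinearMap.ker (f : E →ₗ[ℂ] F) : Set E)) := by
  -- `f` as a normed group hom
  set g : NormedAddGroupHom E F :=
    { toFun := f
      map_add' := map_add f
      bound' := ⟨‖f‖, f.le_opNorm⟩ } with hg
  -- `g` is surjective onto its range with constant `C + 1`
  have hsurj : g.SurjectiveOnWith g.range (C + 1) := by
    rintro _ ⟨x, rfl⟩
    by_cases hx : f x = 0
    · refine ⟨0, ?_, ?_⟩
      · show f 0 = f x; simp [hx]
      · show ‖(0 : E)‖ ≤ (C + 1) * ‖f x‖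
        simp [hx]
    · have hne : ((LinearMap.ker (f : E →ₗ[ℂ] F) : Set E)).Nonempty := ⟨0, by simp⟩
      have hlt : infDist x (LinearMap.ker (f : E →ₗ[ℂ] F) : Set E) < (C + 1) * ‖f x‖ := by
        have h1 : C * ‖f x‖ < (C + 1) * ‖f x‖ := by
          have : (0:ℝ) < ‖f x‖ := norm_pos_iff.mpr hx
          nlinarith
        exact lt_of_le_of_lt (hstrict x) h1
      obtain ⟨k, hk, hdk⟩ := (infDist_lt_iff hne).mp hlt
      refine ⟨x - k, ?_, ?_⟩
      · show f (x - k) = f x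
        have : f k = 0 := hk
        simp [map_sub, this]
      · show ‖x - k‖ ≤ (C + 1) * ‖f x‖
        rw [← dist_eq_norm]
        exact hdk.le
  -- `fbar` coincides with `g.completion`
  have hfbar : (fbar : Completion E → Completion F) = g.completion := by
    apply Completion.ext fbar.continuous g.completion.continuous
    intro x
    rw [hext x, NormedAddGroupHom.completion_coe]
    rfl
  -- kernels coincide as sets
  have hker : (LinearMap.ker (fbar : Completion E →ₗ[ℂ] Completion F) : Set (Completion E)) =
      (g.completion.ker : Set (Completion E)) := by
    ext y
    simp only [SetLike.mem_coe, LinearMap.mem_ker, NormedAddGroupHom.mem_ker,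
      ContinuousLinearMap.coe_coe]
    constructor
    · intro h; rw [← hfbar]; exact h
    · intro h
      have : (fbar : Completion E → Completion F) y = 0 := by rw [hfbar]; exact h
      exact this
  rw [hker, NormedAddGroupHom.ker_completion hsurj]
  have hrange : ((NormedAddCommGroup.toCompl.comp (NormedAddGroupHom.incl g.ker)).range :
      Set (Completion E)) = (fun x : E => (x : Completion E)) '' (LinearMap.ker (f : E →ₗ[ℂ] F) : Set E) := by
    ext y
    simp only [SetLike.mem_coe, NormedAddGroupHom.mem_range, Set.mem_image, LinearMap.mem_ker]
    constructor
    · rintro ⟨⟨x, hx⟩, rfl⟩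
      exact ⟨x, hx, rfl⟩
    · rintro ⟨x, hx, rfl⟩
      exact ⟨⟨x, hx⟩, rfl⟩
  rw [hrange]
end

section
/- Let E and F be normed spaces over ℂ, let f : E → F be a continuous linear map which is topologically strict, i.e., there exists a constant C > 0 such that for every x ∈ E the distance from x to ker f satisfies infDist(x, ker f) ≤ C · ‖f x‖. Let f̄ : Completion E → Completion F denote the unique continuous linear extension of f to the completions. Then the range of f̄ equals the closure in Completion F of the image of f (viewed inside Completion F via the canonical embedding F → Completion F). -/
open UniformSpace Metric

/-- For a topologically strict continuous linear map `f : E → F` between normed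
spaces, the range of the extension `f̄ : Completion E → Completion F` is the
closure of the image of `f` viewed inside `Completion F` via the canonical
embedding `F → Completion F`. -/
theorem range_completion_extension_eq_closure_range
    {E F : Type*} [NormedAddCommGroup E] [NormedSpace ℂ E]
    [NormedAddCommGroup F] [NormedSpace ℂ F]
    (f : E →L[ℂ] F) (C : ℝ) (hC : 0 < C)
    (hstrict : ∀ x : E, infDist x (LinearMap.ker (f : E →ₗ[ℂ] F) : Set E) ≤ C * ‖f x‖)
    (fbar : Completion E →L[ℂ] Completion F)
    (hext : ∀ x : E, fbar (x : Completion E) = ((f x : F) : Completion F)) :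
    (LinearMap.range (fbar : Completion E →ₗ[ℂ] Completion F) : Set (Completion F)) =
      closure ((fun y : F => (y : Completion F)) '' (LinearMap.range (f : E →ₗ[ℂ] F) : Set F)) := by
  apply Set.Subset.antisymm
  · rintro _ ⟨u, rfl⟩
    have hu : u ∈ closure (Set.range ((↑) : E → Completion E)) := by
      rw [Completion.denseRange_coe.closure_range]; trivial
    refine map_mem_closure fbar.continuous hu ?_
    rintro _ ⟨x, rfl⟩
    exact ⟨f x, ⟨x, rfl⟩, (hext x).symm⟩
  · -- set up the normed group hom
    set g : NormedAddGroupHom (Completion E) (Completion F) :=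
      fbar.toLinearMap.toAddMonoidHom.mkNormedAddGroupHom ‖fbar‖ fbar.le_opNorm with hg
    have hgcoe : ∀ u, g u = fbar u := fun u => rfl
    set K : AddSubgroup (Completion F) :=
      AddSubgroup.map (Completion.toComplL (𝕜 := ℂ) (E := F)).toLinearMap.toAddMonoidHom
        (LinearMap.range (f : E →ₗ[ℂ] F)).toAddSubgroup with hK
    have hKset : (K : Set (Completion F)) =
        (fun y : F => (y : Completion F)) '' (LinearMap.range (f : E →ₗ[ℂ] F) : Set F) := rfl
    have hsur : g.SurjectiveOnWith K (2 * C) := by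
      rintro _ ⟨y, ⟨x, rfl⟩, rfl⟩
      by_cases h0 : f x = 0
      · refine ⟨0, ?_, ?_⟩
        · simp [hgcoe, h0, Completion.toComplL, Completion.coe_zero]
        · simp only [norm_zero]; positivity
      · have hlt : infDist x (LinearMap.ker (f : E →ₗ[ℂ] F) : Set E) < 2 * C * ‖f x‖ := by
          calc infDist x (LinearMap.ker (f : E →ₗ[ℂ] F) : Set E) ≤ C * ‖f x‖ := hstrict x
          _ < 2 * C * ‖f x‖ := by
            have : 0 < ‖f x‖ := norm_pos_iff.2 h0
            nlinarith
        obtain ⟨k, hk, hdist⟩ := (infDist_lt_iff ⟨0, (LinearMap.ker (f : E →ₗ[ℂ] F)).zero_mem⟩).1 hlt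
        refine ⟨((x - k : E) : Completion E), ?_, ?_⟩
        · have hfk : f k = 0 := hk
          simp only [hgcoe, hext, map_sub, hfk, sub_zero]
          rfl
        · rw [Completion.norm_coe]
          calc ‖x - k‖ = dist x k := by rw [dist_eq_norm]
          _ ≤ 2 * C * ‖f x‖ := le_of_lt hdist
          _ = 2 * C * ‖((f x : F) : Completion F)‖ := by rw [Completion.norm_coe]
          _ = 2 * C * ‖(Completion.toComplL (𝕜 := ℂ)).toLinearMap.toAddMonoidHom (f x)‖ := rfl
    have hclos := controlled_closure_of_complete (by positivity : (0:ℝ) < 2 * C)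
      (by norm_num : (0:ℝ) < 1) hsur
    intro y hy
    have hyK : y ∈ K.topologicalClosure := by
      show y ∈ closure (K : Set (Completion F))
      rw [hKset]; exact hy
    obtain ⟨u, hu, -⟩ := hclos y hyK
    exact ⟨u, hu⟩
end

section
/- Let E₁, E₂, E₃ be normed spaces over ℂ and let f : E₁ → E₂ and g : E₂ → E₃ be continuous linear maps such that the sequence is exact, i.e., range f = ker g. Assume both f and g are topologically strict: there are constants C_f, C_g > 0 with infDist(x, ker f) ≤ C_f · ‖f x‖ for all x ∈ E₁ and infDist(y, ker g) ≤ C_g · ‖g y‖ for all y ∈ E₂. Let f̄ : Completion E₁ → Completion E₂ and ḡ : Completion E₂ → Completion E₃ be the unique continuous linear extensions to the completions. Then the completed sequence is again exact: range f̄ = ker ḡ. -/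
open UniformSpace Metric

/-- Passing to completions preserves exactness of topologically exact sequences
of continuous linear maps between normed spaces: if `range f = ker g` and both
`f` and `g` are topologically strict, then the extensions to the completions
satisfy `range f̄ = ker ḡ`. -/
theorem completion_preserves_topologically_exact
    {E₁ E₂ E₃ : Type*}
    [NormedAddCommGroup E₁] [NormedSpace ℂ E₁]
    [NormedAddCommGroup E₂] [NormedSpace ℂ E₂]
    [NormedAddCommGroup E₃] [NormedSpace ℂ E₃]
    (f : E₁ →L[ℂ] E₂) (g : E₂ →L[ℂ] E₃)
    (hexact : LinearMap.range (f : E₁ →ₗ[ℂ] E₂) = LinearMap.ker (g : E₂ →ₗ[ℂ] E₃))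
    (Cf : ℝ) (hCf : 0 < Cf)
    (hf : ∀ x : E₁, infDist x (LinearMap.ker (f : E₁ →ₗ[ℂ] E₂) : Set E₁) ≤ Cf * ‖f x‖)
    (Cg : ℝ) (hCg : 0 < Cg)
    (hg : ∀ y : E₂, infDist y (LinearMap.ker (g : E₂ →ₗ[ℂ] E₃) : Set E₂) ≤ Cg * ‖g y‖)
    (fbar : Completion E₁ →L[ℂ] Completion E₂)
    (hfext : ∀ x : E₁, fbar (x : Completion E₁) = ((f x : E₂) : Completion E₂))
    (gbar : Completion E₂ →L[ℂ] Completion E₃)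
    (hgext : ∀ y : E₂, gbar (y : Completion E₂) = ((g y : E₃) : Completion E₃)) :
    LinearMap.range (fbar : Completion E₁ →ₗ[ℂ] Completion E₂) = LinearMap.ker (gbar : Completion E₂ →ₗ[ℂ] Completion E₃) := by
  have a_pos : ∀ n : ℕ, (0:ℝ) < (1/2)^n := fun n => by positivity
  apply le_antisymm
  · -- easy inclusion: gbar ∘ fbar = 0 by density
    rintro _ ⟨t, rfl⟩
    have key : ∀ t : Completion E₁, gbar (fbar t) = 0 := by
      intro t
      refine Completion.induction_on t
        (isClosed_eq (gbar.continuous.comp fbar.continuous) continuous_const) ?_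
      intro a
      rw [hfext, hgext]
      have hmem : f a ∈ LinearMap.ker (g : E₂ →ₗ[ℂ] E₃) := hexact ▸ LinearMap.mem_range_self (f : E₁ →ₗ[ℂ] E₂) a
      have : g (f a) = 0 := hmem
      rw [this]
      exact Completion.coe_zero
    exact key t
  · -- hard inclusion
    intro yb hyb
    have hyb0 : gbar yb = 0 := hyb
    -- approximate yb by elements of E₂
    choose y hy using fun n : ℕ =>
      (Completion.denseRange_coe (α := E₂)).exists_dist_lt yb (a_pos n)
    -- bound ‖g (y n)‖
    have hgy : ∀ n, ‖g (y n)‖ ≤ ‖gbar‖ * (1/2)^n := by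
      intro n
      have : ‖(g (y n) : Completion E₃)‖ = ‖gbar ((y n : E₂) : Completion E₂) - gbar yb‖ := by
        rw [hgext, hyb0, sub_zero]
      calc ‖g (y n)‖ = ‖(g (y n) : Completion E₃)‖ := (Completion.norm_coe _).symm
        _ = ‖gbar (((y n : E₂) : Completion E₂) - yb)‖ := by rw [this, map_sub]
        _ ≤ ‖gbar‖ * ‖((y n : E₂) : Completion E₂) - yb‖ := gbar.le_opNorm _
        _ ≤ ‖gbar‖ * (1/2)^n := by
            refine mul_le_mul_of_nonneg_left ?_ (norm_nonneg _)
            rw [← dist_eq_norm, dist_comm]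
            exact (hy n).le
    set M : ℝ := Cg * ‖gbar‖ + 1 with hM
    have hMpos : 0 < M := by positivity
    -- choose z n ∈ ker g close to y n
    have hker_ne : (LinearMap.ker (g : E₂ →ₗ[ℂ] E₃) : Set E₂).Nonempty := ⟨0, (LinearMap.ker (g : E₂ →ₗ[ℂ] E₃)).zero_mem⟩
    have hz' : ∀ n : ℕ, ∃ z ∈ (LinearMap.ker (g : E₂ →ₗ[ℂ] E₃) : Set E₂), dist (y n) z < M * (1/2)^n := by
      intro n
      rw [← infDist_lt_iff hker_ne]
      calc infDist (y n) (LinearMap.ker (g : E₂ →ₗ[ℂ] E₃) : Set E₂) ≤ Cg * ‖g (y n)‖ := hg (y n)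
        _ ≤ Cg * (‖gbar‖ * (1/2)^n) := by
            exact mul_le_mul_of_nonneg_left (hgy n) hCg.le
        _ < M * (1/2)^n := by
            rw [hM]; ring_nf
            nlinarith [a_pos n, mul_pos hCg (a_pos n)]
    choose z hzker hzdist using hz'
    -- z n ∈ range f : lift to u n
    have hz_range : ∀ n, z n ∈ LinearMap.range (f : E₁ →ₗ[ℂ] E₂) := fun n => hexact ▸ hzker n
    choose u hu using hz_range
    replace hu : ∀ n, f (u n) = z n := hu
    -- dist from z n to yb in the completion
    have hzyb : ∀ n, dist ((z n : E₂) : Completion E₂) yb ≤ (M + 1) * (1/2)^n := by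
      intro n
      calc dist ((z n : E₂) : Completion E₂) yb
          ≤ dist ((z n : E₂) : Completion E₂) ((y n : E₂) : Completion E₂)
            + dist ((y n : E₂) : Completion E₂) yb := dist_triangle _ _ _
        _ ≤ M * (1/2)^n + (1/2)^n := by
            rw [Completion.dist_eq, dist_comm ((y n : E₂) : Completion E₂) yb]
            exact add_le_add ((dist_comm (z n) (y n) ▸ (hzdist n)).le) (hy n).le
        _ = (M + 1) * (1/2)^n := by ring
    -- increments of z
    have hzz : ∀ n, ‖z (n+1) - z n‖ ≤ 2 * (M + 1) * (1/2)^n := by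
      intro n
      have h1 : dist ((z (n+1) : E₂) : Completion E₂) ((z n : E₂) : Completion E₂)
          ≤ (M+1) * (1/2)^(n+1) + (M+1) * (1/2)^n :=
        (dist_triangle _ yb _).trans
          (add_le_add (hzyb (n+1)) (dist_comm yb _ ▸ hzyb n))
      have h2 : ‖z (n+1) - z n‖ = dist ((z (n+1) : E₂) : Completion E₂) ((z n : E₂) : Completion E₂) := by
        rw [Completion.dist_eq, dist_eq_norm]
      rw [h2]
      calc _ ≤ (M+1) * (1/2)^(n+1) + (M+1) * (1/2)^n := h1
        _ ≤ 2 * (M+1) * (1/2)^n := by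
            have : ((1:ℝ)/2)^(n+1) ≤ (1/2)^n := by
              rw [pow_succ]; nlinarith [a_pos n]
            nlinarith [a_pos n]
    -- strictness of f on increments: pick w n ∈ ker f correcting u (n+1) - u n
    set K : ℝ := Cf * (2 * (M + 1)) + 1 with hK
    have hKpos : 0 < K := by positivity
    have hkerf_ne : (LinearMap.ker (f : E₁ →ₗ[ℂ] E₂) : Set E₁).Nonempty := ⟨0, (LinearMap.ker (f : E₁ →ₗ[ℂ] E₂)).zero_mem⟩
    have hw' : ∀ n : ℕ, ∃ w ∈ (LinearMap.ker (f : E₁ →ₗ[ℂ] E₂) : Set E₁),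
        dist (u (n+1) - u n) w < K * (1/2)^n := by
      intro n
      rw [← infDist_lt_iff hkerf_ne]
      calc infDist (u (n+1) - u n) (LinearMap.ker (f : E₁ →ₗ[ℂ] E₂) : Set E₁)
          ≤ Cf * ‖f (u (n+1) - u n)‖ := hf _
        _ = Cf * ‖z (n+1) - z n‖ := by rw [map_sub, hu, hu]
        _ ≤ Cf * (2 * (M+1) * (1/2)^n) := mul_le_mul_of_nonneg_left (hzz n) hCf.le
        _ < K * (1/2)^n := by
            rw [hK]; nlinarith [a_pos n]
    choose w hwker hwdist using hw'
    -- the corrected sequence x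
    set v : ℕ → E₁ := fun n => u (n+1) - u n - w n with hv
    set x : ℕ → E₁ := fun n => u 0 + ∑ i ∈ Finset.range n, v i with hx
    have hfx : ∀ n, f (x n) = z n := by
      intro n
      induction n with
      | zero => simp [hx, hu]
      | succ n ih =>
        have : x (n+1) = x n + v n := by
          simp only [hx, Finset.sum_range_succ]; abel
        rw [this, map_add, ih, hv]
        have hw0 : f (w n) = 0 := hwker n
        simp only [map_sub, hu, hw0, sub_zero]
        abel
    have hxd : ∀ n, dist (x n) (x (n+1)) ≤ K * (1/2)^n := by
      intro n
      have : x (n+1) - x n = v n := by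
        simp only [hx, Finset.sum_range_succ]; abel
      rw [dist_comm, dist_eq_norm, this, hv, ← dist_eq_norm]
      exact (hwdist n).le
    have hcauchy : CauchySeq x :=
      cauchySeq_of_le_geometric (1/2) K (by norm_num) hxd
    have hcauchy' : CauchySeq (fun n => ((x n : E₁) : Completion E₁)) :=
      hcauchy.map (Completion.uniformContinuous_coe E₁)
    obtain ⟨xb, hxb⟩ := cauchySeq_tendsto_of_complete hcauchy'
    refine ⟨xb, ?_⟩
    -- fbar xb = lim fbar (x n) = lim z n = yb
    have h1 : Filter.Tendsto (fun n => fbar ((x n : E₁) : Completion E₁))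
        Filter.atTop (nhds (fbar xb)) := (fbar.continuous.tendsto xb).comp hxb
    have h2 : (fun n => fbar ((x n : E₁) : Completion E₁))
        = fun n => ((z n : E₂) : Completion E₂) := by
      funext n; rw [hfext, hfx]
    rw [h2] at h1
    have h3 : Filter.Tendsto (fun n => ((z n : E₂) : Completion E₂))
        Filter.atTop (nhds yb) := by
      rw [tendsto_iff_dist_tendsto_zero]
      refine squeeze_zero (fun n => dist_nonneg) hzyb ?_
      have := tendsto_pow_atTop_nhds_zero_of_lt_one (r := (1:ℝ)/2) (by norm_num) (by norm_num)
      simpa using this.const_mul (M + 1)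
    exact tendsto_nhds_unique h1 h3
end
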